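/- The vertex set of the (6³) hexagonal tiling satisfies H − H = H ∪ (−H): with Λ the lattice generated by (3/2, √3/2) and (0, √3), and H = Λ ∪ ((1,0) + Λ), one has {u − w : u, w ∈ H} = H ∪ {−h : h ∈ H}. -/
import Mathlib


open Set Pointwise

/-- The period lattice of the unit-edge regular hexagonal tiling, with basis
`(3/2, √3/2)` and `(0, √3)`. -/
def hexLattice : Set (Fin 2 → ℝ) :=
  {x | ∃ a b : ℤ, x = (a : ℝ) • ![3 / 2, Real.sqrt 3 / 2] + (b : ℝ) • ![0, Real.sqrt 3]}

/-- The vertex set of the edge-to-edge tiling of the plane by unit regular hexagons. -/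
def hexVertices : Set (Fin 2 → ℝ) :=
  hexLattice ∪ (fun w => ![1, 0] + w) '' hexLattice

lemma hexLattice_zero : (0 : Fin 2 → ℝ) ∈ hexLattice :=
  ⟨0, 0, by simp⟩

lemma hexLattice_sub {x y : Fin 2 → ℝ} (hx : x ∈ hexLattice) (hy : y ∈ hexLattice) :
    x - y ∈ hexLattice := by
  obtain ⟨a, b, rfl⟩ := hx
  obtain ⟨c, d, rfl⟩ := hy
  exact ⟨a - c, b - d, by push_cast; module⟩

lemma hexLattice_neg {x : Fin 2 → ℝ} (hx : x ∈ hexLattice) : -x ∈ hexLattice := by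
  have := hexLattice_sub hexLattice_zero hx
  simpa using this

/-- The vertex set `H` of the `(6³)` tiling satisfies `H - H = H ∪ (-H)`. -/
theorem stmt_14 : hexVertices - hexVertices = hexVertices ∪ (-hexVertices) := by
  ext x
  simp only [Set.mem_sub, Set.mem_union, Set.mem_neg]
  constructor
  · rintro ⟨u, hu, w, hw, rfl⟩
    rcases hu with hu | ⟨l1, hl1, rfl⟩ <;> rcases hw with hw | ⟨l2, hl2, rfl⟩
    · exact Or.inl (Or.inl (hexLattice_sub hu hw))
    · refine Or.inr (Or.inr ⟨l2 - u, hexLattice_sub hl2 hu, ?_⟩)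
      show ![1, 0] + (l2 - u) = -(u - (![1, 0] + l2)); abel
    · refine Or.inl (Or.inr ⟨l1 - w, hexLattice_sub hl1 hw, ?_⟩)
      show ![1, 0] + (l1 - w) = (![1, 0] + l1) - w; abel
    · refine Or.inl (Or.inl ?_)
      have h : (![1, 0] + l1) - (![1, 0] + l2) = l1 - l2 := by abel
      rw [h]; exact hexLattice_sub hl1 hl2
  · rintro (hx | hx)
    · exact ⟨x, hx, 0, Or.inl hexLattice_zero, by simp⟩
    · exact ⟨0, Or.inl hexLattice_zero, -x, hx, by simp⟩
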